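/- (HK part 1) Suppose two Hermitian operators H = H_0 + V and H' = H_0 + V' on Λ^N ℂ^M, where V and V' are diagonal operators induced by potentials v, v' ∈ ℝ^M via V e_I = (Σ_{i∈I} v_i) e_I, have ground states Ψ and Ψ' with the same density ρ. Then Ψ is also a ground state of H' and Ψ' is also a ground state of H. -/

import Mathlib

open scoped BigOperators

abbrev FIdx (M N : ℕ) := {I : Finset (Fin M) // I.card = N}

/-- Density of a fermionic state. -/
def density (M N : ℕ) (Ψ : FIdx M N → ℂ) (i : Fin M) : ℝ :=
  ∑ I : FIdx M N, if i ∈ I.1 then Complex.normSq (Ψ I) else 0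

/-- The diagonal potential operator on `Λ^N ℂ^M` induced by `v ∈ ℝ^M`:
`V e_I = (Σ_{i∈I} v_i) e_I`. -/
def Vmat (M N : ℕ) (v : Fin M → ℝ) : Matrix (FIdx M N) (FIdx M N) ℂ :=
  Matrix.diagonal fun I => ((∑ i ∈ I.1, v i : ℝ) : ℂ)

/-- The (real) quadratic form `⟨Ψ, HΨ⟩`. -/
noncomputable def quadForm (M N : ℕ) (H : Matrix (FIdx M N) (FIdx M N) ℂ) (Ψ : FIdx M N → ℂ) : ℝ :=
  (dotProduct (star Ψ) (H.mulVec Ψ)).re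

/-- A ground state: a normalized minimizer of the quadratic form over the unit sphere. -/
def IsGroundState (M N : ℕ) (H : Matrix (FIdx M N) (FIdx M N) ℂ) (Ψ : FIdx M N → ℂ) : Prop :=
  (∑ I : FIdx M N, Complex.normSq (Ψ I) = 1) ∧
  ∀ Φ : FIdx M N → ℂ, (∑ I : FIdx M N, Complex.normSq (Φ I) = 1) →
    quadForm M N H Ψ ≤ quadForm M N H Φ


lemma quad_add (M N : ℕ) (A B : Matrix (FIdx M N) (FIdx M N) ℂ) (Ψ : FIdx M N → ℂ) :
    quadForm M N (A + B) Ψ = quadForm M N A Ψ + quadForm M N B Ψ := by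
  simp [quadForm, Matrix.add_mulVec, dotProduct_add]

lemma quad_V (M N : ℕ) (v : Fin M → ℝ) (Ψ : FIdx M N → ℂ) :
    quadForm M N (Vmat M N v) Ψ = ∑ i, v i * density M N Ψ i := by
  have h1 : quadForm M N (Vmat M N v) Ψ
      = ∑ I : FIdx M N, (∑ i ∈ I.1, v i) * Complex.normSq (Ψ I) := by
    simp only [quadForm, Vmat, dotProduct, Matrix.mulVec_diagonal, Pi.star_apply,
      Complex.re_sum]
    refine Finset.sum_congr rfl fun I _ => ?_
    have : (starRingEnd ℂ) (Ψ I) * (((∑ i ∈ I.1, v i : ℝ) : ℂ) * Ψ I)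
        = ((∑ i ∈ I.1, v i : ℝ) : ℂ) * ((starRingEnd ℂ) (Ψ I) * Ψ I) := by ring
    rw [show star (Ψ I) = (starRingEnd ℂ) (Ψ I) from rfl, this,
      ← Complex.normSq_eq_conj_mul_self, ← Complex.ofReal_mul, Complex.ofReal_re]
  rw [h1]
  simp only [density, Finset.mul_sum, Finset.sum_mul]
  rw [Finset.sum_comm]
  refine Finset.sum_congr rfl fun I _ => ?_
  simp [mul_ite, Finset.sum_ite_mem]

lemma quad_diff (M N : ℕ) (H0 : Matrix (FIdx M N) (FIdx M N) ℂ) (v v' : Fin M → ℝ)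
    (Ψ : FIdx M N → ℂ) :
    quadForm M N (H0 + Vmat M N v) Ψ - quadForm M N (H0 + Vmat M N v') Ψ
      = ∑ i, (v i - v' i) * density M N Ψ i := by
  rw [quad_add, quad_add, quad_V, quad_V]
  simp only [sub_mul]
  rw [Finset.sum_sub_distrib]
  ring

/-- (HK part 1) If `H = H₀ + V` and `H' = H₀ + V'` have ground states `Ψ` and `Ψ'` with the
same density, then `Ψ` is also a ground state of `H'` and `Ψ'` is also a ground state of `H`. -/
theorem HK_part1 (M N : ℕ) (H0 : Matrix (FIdx M N) (FIdx M N) ℂ) (hH0 : H0.IsHermitian)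
    (v v' : Fin M → ℝ) (Ψ Ψ' : FIdx M N → ℂ)
    (hΨ : IsGroundState M N (H0 + Vmat M N v) Ψ)
    (hΨ' : IsGroundState M N (H0 + Vmat M N v') Ψ')
    (hρ : density M N Ψ = density M N Ψ') :
    IsGroundState M N (H0 + Vmat M N v') Ψ ∧ IsGroundState M N (H0 + Vmat M N v) Ψ' := by

  set A := H0 + Vmat M N v
  set B := H0 + Vmat M N v'
  have hd : quadForm M N A Ψ - quadForm M N B Ψ = quadForm M N A Ψ' - quadForm M N B Ψ' := by
    rw [quad_diff, quad_diff, hρ]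
  have h1 := hΨ.2 Ψ' hΨ'.1
  have h2 := hΨ'.2 Ψ hΨ.1
  have he : quadForm M N B Ψ = quadForm M N B Ψ' := le_antisymm (by linarith) h2
  have he' : quadForm M N A Ψ = quadForm M N A Ψ' := by linarith
  refine ⟨⟨hΨ.1, fun Φ hΦ => ?_⟩, ⟨hΨ'.1, fun Φ hΦ => ?_⟩⟩
  · rw [he]; exact hΨ'.2 Φ hΦ
  · rw [← he']; exact hΨ.2 Φ hΦ
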